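/- Let R, C > 0 and let w₁, w₂ : [0,1] → ℝ be continuous, strictly increasing functions with w₂(0) ≤ w₁(0). For p = (p₁, p₂, p₃) in the standard simplex Δ₂ ⊂ ℝ³ define u₁(p) = R − C·w₁(p₁), u₂(p) = R − C·w₂(p₂), and u₃(p) = 0. Then there exists exactly one p ∈ Δ₂ such that for every i ∈ {1,2,3}, p_i > 0 implies u_i(p) = max_{j∈{1,2,3}} u_j(p). (The paper's Lemma 1 for two unobservable GI/G/1 queues in parallel, stated with the properties of the stationary mean waiting-time functions that the proof uses: w_m is the continuous, strictly increasing mean stationary waiting time—service inclusive—in queue m as a function of the joining probability p_m, with w_m(0) = 1/μ_m the mean service time, and the ordering 1/μ₁ ≥ 1/μ₂.) -/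

import Mathlib

noncomputable section

open Set

/-- two unobservable GI/G/1 queues in parallel: let `R, C > 0` and
let `w₁, w₂ : [0,1] → ℝ` be continuous, strictly increasing, with `w₂(0) ≤ w₁(0)`.
For `p = (p₁, p₂, p₃)` in the standard simplex of `ℝ³`, put
`u(p) = (R − C·w₁(p₁), R − C·w₂(p₂), 0)`. Then there is exactly one `p` in the
simplex such that every action played with positive probability achieves the
maximal expected utility. -/
theorem stmt14 (R C : ℝ) (hR : 0 < R) (hC : 0 < C) (w₁ w₂ : ℝ → ℝ)
    (hw₁c : ContinuousOn w₁ (Set.Icc 0 1)) (hw₂c : ContinuousOn w₂ (Set.Icc 0 1))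
    (hw₁m : StrictMonoOn w₁ (Set.Icc 0 1)) (hw₂m : StrictMonoOn w₂ (Set.Icc 0 1))
    (h0 : w₂ 0 ≤ w₁ 0) :
    ∃! p : Fin 3 → ℝ,
      ((∀ i, 0 ≤ p i) ∧ ∑ i, p i = 1) ∧
        ∀ i : Fin 3, 0 < p i → ∀ j : Fin 3,
          ![R - C * w₁ (p 0), R - C * w₂ (p 1), 0] j ≤
            ![R - C * w₁ (p 0), R - C * w₂ (p 1), 0] i := by
  -- Characterization of the Nash condition.
  have key : ∀ p : Fin 3 → ℝ,
      (∀ i : Fin 3, 0 < p i → ∀ j : Fin 3,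
          ![R - C * w₁ (p 0), R - C * w₂ (p 1), 0] j ≤
            ![R - C * w₁ (p 0), R - C * w₂ (p 1), 0] i)
      ↔ ((0 < p 0 → w₁ (p 0) ≤ w₂ (p 1) ∧ C * w₁ (p 0) ≤ R) ∧
          (0 < p 1 → w₂ (p 1) ≤ w₁ (p 0) ∧ C * w₂ (p 1) ≤ R) ∧
          (0 < p 2 → R ≤ C * w₁ (p 0) ∧ R ≤ C * w₂ (p 1))) := by
    intro p
    constructor
    · intro h
      refine ⟨fun hp => ⟨?_, ?_⟩, fun hp => ⟨?_, ?_⟩, fun hp => ⟨?_, ?_⟩⟩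
      · have h1 := h 0 hp 1; simp at h1
        have : C * w₁ (p 0) ≤ C * w₂ (p 1) := by linarith
        exact le_of_mul_le_mul_left this hC
      · have h1 := h 0 hp 2; simp at h1; linarith
      · have h1 := h 1 hp 0; simp at h1
        have : C * w₂ (p 1) ≤ C * w₁ (p 0) := by linarith
        exact le_of_mul_le_mul_left this hC
      · have h1 := h 1 hp 2; simp at h1; linarith
      · have h1 := h 2 hp 0; simp at h1; linarith
      · have h1 := h 2 hp 1; simp at h1; linarith
    · rintro ⟨h1, h2, h3⟩ i hi j
      fin_cases i
      · obtain ⟨ha, hb⟩ := h1 hi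
        have : C * w₁ (p 0) ≤ C * w₂ (p 1) := mul_le_mul_of_nonneg_left ha hC.le
        fin_cases j <;> simp <;> linarith
      · obtain ⟨ha, hb⟩ := h2 hi
        have : C * w₂ (p 1) ≤ C * w₁ (p 0) := mul_le_mul_of_nonneg_left ha hC.le
        fin_cases j <;> simp <;> linarith
      · obtain ⟨ha, hb⟩ := h3 hi
        fin_cases j <;> simp <;> linarith
  have sum3 : ∀ p : Fin 3 → ℝ, (∑ i, p i) = p 0 + p 1 + p 2 := fun p => by
    simp [Fin.sum_univ_three]
  suffices h : ∃! p : Fin 3 → ℝ,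
      ((∀ i, 0 ≤ p i) ∧ p 0 + p 1 + p 2 = 1) ∧
        ((0 < p 0 → w₁ (p 0) ≤ w₂ (p 1) ∧ C * w₁ (p 0) ≤ R) ∧
          (0 < p 1 → w₂ (p 1) ≤ w₁ (p 0) ∧ C * w₂ (p 1) ≤ R) ∧
          (0 < p 2 → R ≤ C * w₁ (p 0) ∧ R ≤ C * w₂ (p 1))) by
    obtain ⟨p, ⟨⟨hpn, hps⟩, hpN⟩, hpu⟩ := h
    refine ⟨p, ⟨⟨hpn, by rw [sum3]; exact hps⟩, (key p).mpr hpN⟩, ?_⟩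
    rintro q ⟨⟨hqn, hqs⟩, hqN⟩
    exact hpu q ⟨⟨hqn, by rw [← sum3 q]; exact hqs⟩, (key q).mp hqN⟩
  have m0 : (0:ℝ) ∈ Icc (0:ℝ) 1 := by norm_num
  have m1 : (1:ℝ) ∈ Icc (0:ℝ) 1 := by norm_num
  have hw01 : w₁ 0 < w₁ 1 := hw₁m m0 m1 one_pos
  have qmem : ∀ q : Fin 3 → ℝ, (∀ i, 0 ≤ q i) → q 0 + q 1 + q 2 = 1 →
      q 0 ∈ Icc (0:ℝ) 1 ∧ q 1 ∈ Icc (0:ℝ) 1 ∧ q 2 ∈ Icc (0:ℝ) 1 := by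
    intro q hn hs
    exact ⟨⟨hn 0, by linarith [hn 1, hn 2]⟩, ⟨hn 1, by linarith [hn 0, hn 2]⟩,
      ⟨hn 2, by linarith [hn 0, hn 1]⟩⟩
  rcases le_or_gt R (C * w₂ 0) with hA | hB
  · -- Case A : balking equilibrium (0,0,1)
    refine ⟨![0,0,1], ⟨⟨fun i => by fin_cases i <;> norm_num, by norm_num [Matrix.cons_val_two]⟩, ?_, ?_, ?_⟩, ?_⟩
    · simp
    · simp
    · simp only [Matrix.cons_val_zero, Matrix.cons_val_one, Matrix.head_cons]
      intro _
      constructor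
      · calc R ≤ C * w₂ 0 := hA
          _ ≤ C * w₁ 0 := mul_le_mul_of_nonneg_left h0 hC.le
      · simpa using hA
    · rintro q ⟨⟨hqn, hqs⟩, hq0, hq1, hq2⟩
      obtain ⟨hm0, hm1, hm2⟩ := qmem q hqn hqs
      have e1 : q 1 = 0 := by
        by_contra h
        have hp : 0 < q 1 := lt_of_le_of_ne (hqn 1) (Ne.symm h)
        obtain ⟨-, hb⟩ := hq1 hp
        have : w₂ (q 1) ≤ w₂ 0 := le_of_mul_le_mul_left (by linarith) hC
        have := (hw₂m.le_iff_le hm1 m0).mp this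
        linarith
      have e0 : q 0 = 0 := by
        by_contra h
        have hp : 0 < q 0 := lt_of_le_of_ne (hqn 0) (Ne.symm h)
        obtain ⟨ha, -⟩ := hq0 hp
        rw [e1] at ha
        have : w₁ (q 0) ≤ w₁ 0 := le_trans ha h0
        have := (hw₁m.le_iff_le hm0 m0).mp this
        linarith
      have e2 : q 2 = 1 := by linarith
      funext i; fin_cases i
      · simpa using e0
      · simpa using e1
      · simpa using e2
  · -- Case B : joining queue 2 is profitable at 0
    have hq1pos : ∀ q : Fin 3 → ℝ, (∀ i, 0 ≤ q i) → q 0 + q 1 + q 2 = 1 →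
        (0 < q 0 → w₁ (q 0) ≤ w₂ (q 1) ∧ C * w₁ (q 0) ≤ R) →
        (0 < q 2 → R ≤ C * w₁ (q 0) ∧ R ≤ C * w₂ (q 1)) → 0 < q 1 := by
      intro q hn hs h0' h2'
      by_contra h
      have e1 : q 1 = 0 := le_antisymm (not_lt.mp h) (hn 1)
      have e2 : q 2 = 0 := by
        by_contra h2
        have hp : 0 < q 2 := lt_of_le_of_ne (hn 2) (Ne.symm h2)
        obtain ⟨-, hb⟩ := h2' hp
        rw [e1] at hb; linarith
      have e0 : q 0 = 1 := by linarith
      obtain ⟨ha, -⟩ := h0' (by rw [e0]; norm_num)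
      rw [e0, e1] at ha
      linarith
    rcases le_or_gt (w₂ 1) (w₁ 0) with hB12 | hB3
    · rcases le_or_gt (C * w₂ 1) R with h1R | hR1
      · -- B1 : everyone joins queue 2, p = (0,1,0)
        refine ⟨![0,1,0], ⟨⟨fun i => by fin_cases i <;> norm_num, by norm_num [Matrix.cons_val_two]⟩,
          by norm_num, ?_, by norm_num [Matrix.cons_val_two]⟩, ?_⟩
        · simp only [Matrix.cons_val_zero, Matrix.cons_val_one, Matrix.head_cons]
          exact fun _ => ⟨hB12, h1R⟩
        · rintro q ⟨⟨hqn, hqs⟩, hq0, hq1, hq2⟩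
          obtain ⟨hm0q, hm1q, hm2q⟩ := qmem q hqn hqs
          have hp1 := hq1pos q hqn hqs hq0 hq2
          obtain ⟨hc, hd⟩ := hq1 hp1
          have e1 : q 1 = 1 := by
            by_contra h
            have hlt : q 1 < 1 := lt_of_le_of_ne hm1q.2 h
            rcases (hqn 2).lt_or_eq with h2 | h2
            · obtain ⟨-, hb⟩ := hq2 h2
              have : w₂ 1 ≤ w₂ (q 1) := le_of_mul_le_mul_left (by linarith) hC
              have := (hw₂m.le_iff_le m1 hm1q).mp this
              linarith
            · have h0p : 0 < q 0 := by
                rcases (hqn 0).lt_or_eq with h3 | h3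
                · exact h3
                · exfalso; rw [← h3, ← h2] at hqs; linarith
              obtain ⟨ha, -⟩ := hq0 h0p
              have heq : w₁ (q 0) = w₂ (q 1) := le_antisymm ha hc
              have h5 : w₂ (q 1) < w₂ 1 := hw₂m hm1q m1 hlt
              have h6 : w₁ 0 ≤ w₁ (q 0) := (hw₁m.le_iff_le m0 hm0q).mpr (hqn 0)
              linarith
          have e0 : q 0 = 0 := by linarith [hqn 0, hqn 2]
          have e2 : q 2 = 0 := by linarith
          funext i; fin_cases i
          · simpa using e0
          · simpa using e1
          · simpa using e2
      · -- B2 : mixed between queue 2 and balking only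
        have hle1 : w₂ 0 ≤ R / C := by rw [le_div_iff₀ hC]; linarith
        have hle2 : R / C ≤ w₂ 1 := by rw [div_le_iff₀ hC]; linarith
        obtain ⟨t, htm, htv⟩ := intermediate_value_Icc (by norm_num : (0:ℝ) ≤ 1) hw₂c ⟨hle1, hle2⟩
        have hw0lt : w₂ 0 < R / C := by rw [lt_div_iff₀ hC]; linarith
        have hw1gt : R / C < w₂ 1 := by rw [div_lt_iff₀ hC]; linarith
        have ht0 : 0 < t := by
          rcases htm.1.lt_or_eq with h | h
          · exact h
          · exfalso; rw [← h] at htv; linarith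
        have ht1 : t < 1 := by
          rcases htm.2.lt_or_eq with h | h
          · exact h
          · exfalso; rw [h] at htv; linarith
        have hCt : C * w₂ t = R := by rw [htv]; field_simp
        have hwtle : w₂ t < w₂ 1 := hw₂m htm m1 ht1
        refine ⟨![0, t, 1 - t], ⟨⟨fun i => by fin_cases i <;> simp <;> linarith, by norm_num [Matrix.cons_val_two]⟩,
          by norm_num, ?_, ?_⟩, ?_⟩
        · simp only [Matrix.cons_val_zero, Matrix.cons_val_one, Matrix.head_cons]
          exact fun _ => ⟨by linarith, le_of_eq hCt⟩
        · simp only [Matrix.cons_val_zero, Matrix.cons_val_one, Matrix.head_cons]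
          intro _
          refine ⟨?_, le_of_eq hCt.symm⟩
          calc R = C * w₂ t := hCt.symm
            _ ≤ C * w₁ 0 := mul_le_mul_of_nonneg_left (by linarith) hC.le
        · rintro q ⟨⟨hqn, hqs⟩, hq0, hq1, hq2⟩
          obtain ⟨hm0q, hm1q, hm2q⟩ := qmem q hqn hqs
          have hp1 := hq1pos q hqn hqs hq0 hq2
          obtain ⟨hc, hd⟩ := hq1 hp1
          have hkey : C * w₂ (q 1) = R := by
            rcases (hqn 2).lt_or_eq with h2 | h2
            · exact le_antisymm hd (hq2 h2).2
            · exfalso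
              rcases (hqn 0).lt_or_eq with h0' | h0'
              · obtain ⟨ha, -⟩ := hq0 h0'
                have heq : w₁ (q 0) = w₂ (q 1) := le_antisymm ha hc
                have hq1lt : q 1 < 1 := by linarith
                have h5 : w₂ (q 1) < w₂ 1 := hw₂m hm1q m1 hq1lt
                have h6 : w₁ 0 ≤ w₁ (q 0) := (hw₁m.le_iff_le m0 hm0q).mpr (hqn 0)
                linarith
              · have e1 : q 1 = 1 := by linarith
                rw [e1] at hd; linarith
          have e1 : q 1 = t := by
            refine hw₂m.injOn hm1q htm ?_
            rw [htv, eq_div_iff (ne_of_gt hC)]; linarith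
          have e0 : q 0 = 0 := by
            rcases (hqn 0).lt_or_eq with h0' | h0'
            · exfalso
              obtain ⟨ha, -⟩ := hq0 h0'
              have heq : w₁ (q 0) = w₂ (q 1) := le_antisymm ha hc
              have h5 : w₂ (q 1) < w₂ 1 := by rw [e1]; exact hwtle
              have h6 : w₁ 0 ≤ w₁ (q 0) := (hw₁m.le_iff_le m0 hm0q).mpr (hqn 0)
              linarith
            · exact h0'.symm
          have e2 : q 2 = 1 - t := by linarith
          funext i; fin_cases i
          · simpa using e0
          · simpa using e1
          · simpa using e2
    · -- Case B3 : w₁ 0 < w₂ 1, find the crossing point t₁ of w₁ (1 - t) and w₂ t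
      have hDc : ContinuousOn (fun t => w₁ (1 - t) - w₂ t) (Icc (0:ℝ) 1) := by
        refine ContinuousOn.sub ?_ hw₂c
        exact hw₁c.comp ((continuous_const.sub continuous_id).continuousOn)
          (fun t ht => ⟨by linarith [ht.2], by linarith [ht.1]⟩)
      have hmem : (0:ℝ) ∈ Icc ((fun t => w₁ (1 - t) - w₂ t) 1) ((fun t => w₁ (1 - t) - w₂ t) 0) := by
        constructor <;> simp <;> linarith
      obtain ⟨t₁, ht₁m, ht₁v⟩ := intermediate_value_Icc' (by norm_num : (0:ℝ) ≤ 1) hDc hmem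
      replace ht₁v : w₁ (1 - t₁) - w₂ t₁ = 0 := ht₁v
      have hveq : w₁ (1 - t₁) = w₂ t₁ := by linarith
      have ht₁0 : 0 < t₁ := by
        rcases ht₁m.1.lt_or_eq with h | h
        · exact h
        · exfalso; rw [← h] at hveq; norm_num at hveq; linarith
      have ht₁1 : t₁ < 1 := by
        rcases ht₁m.2.lt_or_eq with h | h
        · exact h
        · exfalso; rw [h] at hveq; norm_num at hveq; linarith
      have hx₁m : 1 - t₁ ∈ Icc (0:ℝ) 1 := ⟨by linarith, by linarith⟩
      have Duniq : ∀ t, t ∈ Icc (0:ℝ) 1 → w₁ (1 - t) = w₂ t → t = t₁ := by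
        intro t htm htv2
        have hxm : 1 - t ∈ Icc (0:ℝ) 1 := ⟨by linarith [htm.2], by linarith [htm.1]⟩
        rcases lt_trichotomy t t₁ with h | h | h
        · exfalso
          have h2 : w₂ t < w₂ t₁ := hw₂m htm ht₁m h
          have h1 : w₁ (1 - t₁) < w₁ (1 - t) := hw₁m hx₁m hxm (by linarith)
          linarith
        · exact h
        · exfalso
          have h2 : w₂ t₁ < w₂ t := hw₂m ht₁m htm h
          have h1 : w₁ (1 - t) < w₁ (1 - t₁) := hw₁m hxm hx₁m (by linarith)
          linarith
      rcases le_or_gt (C * w₂ t₁) R with hta | htb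
      · -- B3a : both queues used, no balking : p = (1 - t₁, t₁, 0)
        refine ⟨![1 - t₁, t₁, 0], ⟨⟨fun i => by fin_cases i <;> simp <;> linarith, by norm_num [Matrix.cons_val_two]⟩,
          ?_, ?_, by norm_num [Matrix.cons_val_two]⟩, ?_⟩
        · simp only [Matrix.cons_val_zero, Matrix.cons_val_one, Matrix.head_cons]
          exact fun _ => ⟨le_of_eq hveq, by rw [hveq]; exact hta⟩
        · simp only [Matrix.cons_val_zero, Matrix.cons_val_one, Matrix.head_cons]
          exact fun _ => ⟨le_of_eq hveq.symm, hta⟩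
        · rintro q ⟨⟨hqn, hqs⟩, hq0, hq1, hq2⟩
          obtain ⟨hm0q, hm1q, hm2q⟩ := qmem q hqn hqs
          have hp1 := hq1pos q hqn hqs hq0 hq2
          obtain ⟨hc, hd⟩ := hq1 hp1
          have e2 : q 2 = 0 := by
            by_contra h2
            have hp2 : 0 < q 2 := lt_of_le_of_ne (hqn 2) (Ne.symm h2)
            obtain ⟨h2a, h2b⟩ := hq2 hp2
            have ht₁le : w₂ t₁ ≤ w₂ (q 1) := le_of_mul_le_mul_left (by linarith) hC
            rcases (hqn 0).lt_or_eq with h0' | h0'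
            · obtain ⟨ha, -⟩ := hq0 h0'
              have heq : w₁ (q 0) = w₂ (q 1) := le_antisymm ha hc
              have h6 : w₁ (1 - t₁) ≤ w₁ (q 0) := by rw [hveq, heq]; exact ht₁le
              have h7 : 1 - t₁ ≤ q 0 := (hw₁m.le_iff_le hx₁m hm0q).mp h6
              have h8 : t₁ ≤ q 1 := (hw₂m.le_iff_le ht₁m hm1q).mp ht₁le
              linarith
            · rw [← h0'] at hc
              have h5 : w₁ 0 < w₁ (1 - t₁) := hw₁m m0 hx₁m (by linarith)
              linarith
          have h0p : 0 < q 0 := by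
            rcases (hqn 0).lt_or_eq with h3 | h3
            · exact h3
            · exfalso
              have e1 : q 1 = 1 := by linarith
              rw [← h3] at hc; rw [e1] at hc
              linarith
          obtain ⟨ha, -⟩ := hq0 h0p
          have heq : w₁ (q 0) = w₂ (q 1) := le_antisymm ha hc
          have hq0e : q 0 = 1 - q 1 := by linarith
          have e1 : q 1 = t₁ := Duniq (q 1) hm1q (by rw [← hq0e]; exact heq)
          have e0 : q 0 = 1 - t₁ := by linarith
          funext i; fin_cases i
          · simpa using e0
          · simpa using e1
          · simpa using e2
      · -- B3b : balking is used
        have h1 : w₂ 0 < R / C := by rw [lt_div_iff₀ hC]; linarith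
        have h2 : R / C < w₂ t₁ := by rw [div_lt_iff₀ hC]; linarith
        have h3 : w₂ t₁ ≤ w₂ 1 := (hw₂m.le_iff_le ht₁m m1).mpr ht₁1.le
        obtain ⟨t₂, ht₂m, ht₂v⟩ := intermediate_value_Icc (by norm_num : (0:ℝ) ≤ 1) hw₂c
          ⟨h1.le, by linarith⟩
        have ht₂t₁ : t₂ < t₁ := (hw₂m.lt_iff_lt ht₂m ht₁m).mp (by rw [ht₂v]; exact h2)
        have ht₂0 : 0 < t₂ := by
          rcases ht₂m.1.lt_or_eq with h | h
          · exact h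
          · exfalso; rw [← h] at ht₂v; linarith
        have hCt₂ : C * w₂ t₂ = R := by rw [ht₂v]; field_simp
        have hkeyall : ∀ q : Fin 3 → ℝ, (∀ i, 0 ≤ q i) → q 0 + q 1 + q 2 = 1 →
            (0 < q 0 → w₁ (q 0) ≤ w₂ (q 1) ∧ C * w₁ (q 0) ≤ R) →
            (0 < q 1 → w₂ (q 1) ≤ w₁ (q 0) ∧ C * w₂ (q 1) ≤ R) →
            (0 < q 2 → R ≤ C * w₁ (q 0) ∧ R ≤ C * w₂ (q 1)) →
            q 1 = t₂ := by
          intro q hqn hqs hq0 hq1 hq2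
          obtain ⟨hm0q, hm1q, hm2q⟩ := qmem q hqn hqs
          have hp1 := hq1pos q hqn hqs hq0 hq2
          obtain ⟨hc, hd⟩ := hq1 hp1
          have hkey : C * w₂ (q 1) = R := by
            rcases (hqn 2).lt_or_eq with h2' | h2'
            · exact le_antisymm hd (hq2 h2').2
            · exfalso
              rcases (hqn 0).lt_or_eq with h0' | h0'
              · obtain ⟨ha, -⟩ := hq0 h0'
                have heq : w₁ (q 0) = w₂ (q 1) := le_antisymm ha hc
                have hq0e : q 0 = 1 - q 1 := by linarith
                have e1 : q 1 = t₁ := Duniq (q 1) hm1q (by rw [← hq0e]; exact heq)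
                rw [e1] at hd; linarith
              · have e1 : q 1 = 1 := by linarith
                rw [← h0'] at hc; rw [e1] at hc
                linarith
          refine hw₂m.injOn hm1q ht₂m ?_
          rw [ht₂v, eq_div_iff (ne_of_gt hC)]; linarith
        rcases le_or_gt R (C * w₁ 0) with hi | hii
        · -- B3b-i : queue 1 unused, p = (0, t₂, 1 - t₂)
          refine ⟨![0, t₂, 1 - t₂], ⟨⟨fun i => by fin_cases i <;> simp <;> linarith,
            by norm_num [Matrix.cons_val_two]⟩, by norm_num, ?_, ?_⟩, ?_⟩
          · simp only [Matrix.cons_val_zero, Matrix.cons_val_one, Matrix.head_cons]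
            intro _
            refine ⟨?_, le_of_eq hCt₂⟩
            have : C * w₂ t₂ ≤ C * w₁ 0 := by linarith
            exact le_of_mul_le_mul_left this hC
          · simp only [Matrix.cons_val_zero, Matrix.cons_val_one, Matrix.head_cons]
            exact fun _ => ⟨hi, le_of_eq hCt₂.symm⟩
          · rintro q ⟨⟨hqn, hqs⟩, hq0, hq1, hq2⟩
            obtain ⟨hm0q, hm1q, hm2q⟩ := qmem q hqn hqs
            have e1 : q 1 = t₂ := hkeyall q hqn hqs hq0 hq1 hq2
            have e0 : q 0 = 0 := by
              rcases (hqn 0).lt_or_eq with h0' | h0'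
              · exfalso
                obtain ⟨ha, -⟩ := hq0 h0'
                have hp1 := hq1pos q hqn hqs hq0 hq2
                obtain ⟨hc, -⟩ := hq1 hp1
                have heq : w₁ (q 0) = w₂ (q 1) := le_antisymm ha hc
                have h5 : w₂ (q 1) ≤ w₁ 0 := by
                  rw [e1]
                  have : C * w₂ t₂ ≤ C * w₁ 0 := by linarith
                  exact le_of_mul_le_mul_left this hC
                have h6 : w₁ 0 < w₁ (q 0) := hw₁m m0 hm0q h0'
                linarith
              · exact h0'.symm
            have e2 : q 2 = 1 - t₂ := by linarith
            funext i; fin_cases i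
            · simpa using e0
            · simpa using e1
            · simpa using e2
        · -- B3b-ii : all three actions used, p = (x₂, t₂, 1 - x₂ - t₂)
          have hx1le : w₁ (1 - t₁) ≤ w₁ 1 := (hw₁m.le_iff_le hx₁m m1).mpr (by linarith)
          have h4 : w₁ 0 ≤ R / C := by rw [le_div_iff₀ hC]; linarith
          obtain ⟨x₂, hx₂m, hx₂v⟩ := intermediate_value_Icc (by norm_num : (0:ℝ) ≤ 1) hw₁c
            ⟨h4, by linarith⟩
          have hw0ltr : w₁ 0 < R / C := by rw [lt_div_iff₀ hC]; linarith
          have hx₂0 : 0 < x₂ := by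
            rcases hx₂m.1.lt_or_eq with h | h
            · exact h
            · exfalso; rw [← h] at hx₂v; linarith
          have hx₂lt : x₂ < 1 - t₁ := (hw₁m.lt_iff_lt hx₂m hx₁m).mp (by rw [hx₂v, hveq]; exact h2)
          have hCx₂ : C * w₁ x₂ = R := by rw [hx₂v]; field_simp
          refine ⟨![x₂, t₂, 1 - x₂ - t₂], ⟨⟨fun i => by fin_cases i <;> simp <;> linarith,
            by simp⟩, ?_, ?_, ?_⟩, ?_⟩
          · simp only [Matrix.cons_val_zero, Matrix.cons_val_one, Matrix.head_cons]
            exact fun _ => ⟨by rw [hx₂v, ht₂v], le_of_eq hCx₂⟩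
          · simp only [Matrix.cons_val_zero, Matrix.cons_val_one, Matrix.head_cons]
            exact fun _ => ⟨by rw [hx₂v, ht₂v], le_of_eq hCt₂⟩
          · simp only [Matrix.cons_val_zero, Matrix.cons_val_one, Matrix.head_cons]
            exact fun _ => ⟨le_of_eq hCx₂.symm, le_of_eq hCt₂.symm⟩
          · rintro q ⟨⟨hqn, hqs⟩, hq0, hq1, hq2⟩
            obtain ⟨hm0q, hm1q, hm2q⟩ := qmem q hqn hqs
            have e1 : q 1 = t₂ := hkeyall q hqn hqs hq0 hq1 hq2
            have e0 : q 0 = x₂ := by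
              rcases (hqn 0).lt_or_eq with h0' | h0'
              · obtain ⟨ha, -⟩ := hq0 h0'
                have hp1 := hq1pos q hqn hqs hq0 hq2
                obtain ⟨hc, -⟩ := hq1 hp1
                have heq : w₁ (q 0) = w₂ (q 1) := le_antisymm ha hc
                refine hw₁m.injOn hm0q hx₂m ?_
                rw [heq, e1, ht₂v, hx₂v]
              · exfalso
                have hp1 := hq1pos q hqn hqs hq0 hq2
                obtain ⟨hc, -⟩ := hq1 hp1
                rw [← h0'] at hc
                rw [e1, ht₂v] at hc
                linarith
            have e2 : q 2 = 1 - x₂ - t₂ := by linarith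
            funext i; fin_cases i
            · simpa using e0
            · simpa using e1
            · simpa using e2
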